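/- (One-step feasibility of the filtered iterate.) Let g be C¹ on an open set containing the compact box I ⊂ ℝ^{n_u} with strict univariate Lipschitz constants κ_i > 0 on I. Let u, v ∈ I and K ∈ [0,1] satisfy g(u) + K Σ_{i=1}^{n_u} κ_i |v_i − u_i| ≤ 0. Then g(u + K(v − u)) ≤ 0; moreover, if in addition g(u) < 0, then g(u + K(v − u)) < 0. -/

import Mathlib

/-- One-step feasibility of the filtered iterate: if `g` is C¹ on an
open set containing the box `I = Icc uL uU` with strict univariate Lipschitz constants
`κ i` on `I`, and `u, v ∈ I`, `K ∈ [0,1]` satisfy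
`g u + K Σ_i κ i |v i - u i| ≤ 0`, then `g (u + K • (v - u)) ≤ 0`; moreover it is
strict if in addition `g u < 0`. -/
theorem one_step_feasibility
    {n : ℕ} (uL uU : Fin n → ℝ)
    (g : (Fin n → ℝ) → ℝ)
    (U : Set (Fin n → ℝ)) (hUopen : IsOpen U) (hIU : Set.Icc uL uU ⊆ U)
    (hg : ContDiffOn ℝ 1 g U)
    (κ : Fin n → ℝ) (hκpos : ∀ i, 0 < κ i)
    (hκ : ∀ u ∈ Set.Icc uL uU, ∀ i, |fderiv ℝ g u (Pi.single i 1)| < κ i)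
    (u v : Fin n → ℝ) (hu : u ∈ Set.Icc uL uU) (hv : v ∈ Set.Icc uL uU)
    (K : ℝ) (hK : K ∈ Set.Icc (0 : ℝ) 1)
    (hfeas : g u + K * ∑ i, κ i * |v i - u i| ≤ 0) :
    g (u + K • (v - u)) ≤ 0 ∧ (g u < 0 → g (u + K • (v - u)) < 0) := by
  obtain ⟨hK0, hK1⟩ := hK
  set c : Fin n → ℝ := K • (v - u) with hc
  set A : ℝ := K * ∑ i, κ i * |v i - u i| with hA
  have hSnn : ∀ i ∈ Finset.univ, (0:ℝ) ≤ κ i * |v i - u i| := fun i _ =>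
    mul_nonneg (hκpos i).le (abs_nonneg _)
  have hAnn : 0 ≤ A := mul_nonneg hK0 (Finset.sum_nonneg hSnn)
  rcases eq_or_lt_of_le hAnn with hA0 | hApos
  · -- degenerate case: A = 0, hence u + c = u
    have hwu : u + c = u := by
      rcases mul_eq_zero.mp hA0.symm with hK' | hS
      · simp [hc, hK']
      · have hvu : v = u := by
          funext i
          have h1 := (Finset.sum_eq_zero_iff_of_nonneg hSnn).mp hS i (Finset.mem_univ i)
          have h2 : |v i - u i| = 0 := by
            rcases mul_eq_zero.mp h1 with h | h
            · exact absurd h (hκpos i).ne'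
            · exact h
          have := abs_eq_zero.mp h2
          linarith
        simp [hc, hvu]
      
    rw [hwu]
    exact ⟨by linarith, fun h => h⟩
  · -- main case: A > 0, show g (u + c) < g u + A
    -- the path
    set p : ℝ → (Fin n → ℝ) := fun t => u + t • c with hp
    have hpmem : ∀ t ∈ Set.Icc (0:ℝ) 1, p t ∈ Set.Icc uL uU := by
      intro t ht
      have heq : p t = u + (t * K) • (v - u) := by
        simp [hp, hc, smul_smul]
      rw [heq]
      exact (convex_Icc uL uU).add_smul_sub_mem hu hv
        ⟨mul_nonneg ht.1 hK0, mul_le_one₀ ht.2 hK0 hK1⟩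
    set ψ : ℝ → ℝ := fun t => fderiv ℝ g (p t) c with hψ
    have hpc : Continuous p := by fun_prop
    have hder : ∀ t ∈ Set.Icc (0:ℝ) 1, HasDerivAt (fun s => g (p s)) (ψ t) t := by
      intro t ht
      have hmem : p t ∈ U := hIU (hpmem t ht)
      have hdg : DifferentiableAt ℝ g (p t) :=
        ((hg.differentiableOn one_ne_zero) (p t) hmem).differentiableAt
          (hUopen.mem_nhds hmem)
      have hpd : HasDerivAt p c t := by
        have : HasDerivAt (fun s : ℝ => s • c) ((1:ℝ) • c) t :=
          (hasDerivAt_id t).smul_const c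
        simpa [hp] using this.const_add u
      exact hdg.hasFDerivAt.comp_hasDerivAt t hpd
    -- pointwise strict bound
    have hbound : ∀ t ∈ Set.Icc (0:ℝ) 1, |ψ t| < A := by
      intro t ht
      have hceq : c = ∑ i, c i • (Pi.single i (1:ℝ) : Fin n → ℝ) := by
        funext j
        simp [Finset.sum_apply, Pi.single_apply, Finset.sum_ite_eq']
      have hfeq : ψ t = ∑ i, c i * fderiv ℝ g (p t) (Pi.single i 1) := by
        rw [hψ]
        conv_lhs => rw [hceq]
        simp [map_sum, map_smul]
      have hci : ∀ i, |c i| = K * |v i - u i| := by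
        intro i
        simp [hc, abs_mul, abs_of_nonneg hK0]
      have hAeq : A = ∑ i, |c i| * κ i := by
        rw [hA, Finset.mul_sum]
        refine Finset.sum_congr rfl fun i _ => ?_
        rw [hci i]; ring
      have hle : |ψ t| ≤ ∑ i, |c i| * |fderiv ℝ g (p t) (Pi.single i 1)| := by
        rw [hfeq]
        refine (Finset.abs_sum_le_sum_abs _ _).trans ?_
        refine Finset.sum_le_sum fun i _ => ?_
        rw [abs_mul]
      have hex : ∃ i ∈ Finset.univ, |c i| ≠ 0 := by
        by_contra h
        push_neg at h
        have : A = 0 := by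
          rw [hAeq]
          exact Finset.sum_eq_zero fun i hi => by rw [h i hi, zero_mul]
        linarith
      obtain ⟨i0, _, hi0⟩ := hex
      have hlt : ∑ i, |c i| * |fderiv ℝ g (p t) (Pi.single i 1)| < ∑ i, |c i| * κ i := by
        refine Finset.sum_lt_sum (fun i _ => ?_) ⟨i0, Finset.mem_univ i0, ?_⟩
        · exact mul_le_mul_of_nonneg_left (hκ _ (hpmem t ht) i).le (abs_nonneg _)
        · exact mul_lt_mul_of_pos_left (hκ _ (hpmem t ht) i0)
            (lt_of_le_of_ne (abs_nonneg _) (Ne.symm hi0))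
      rw [hAeq]
      exact lt_of_le_of_lt hle hlt
    -- continuity of ψ on [0,1]
    have hfc : ContinuousOn (fderiv ℝ g) U := hg.continuousOn_fderiv_of_isOpen hUopen le_rfl
    have hψc : ContinuousOn ψ (Set.Icc (0:ℝ) 1) := by
      have : ContinuousOn (fun t => fderiv ℝ g (p t)) (Set.Icc (0:ℝ) 1) :=
        hfc.comp hpc.continuousOn fun t ht => hIU (hpmem t ht)
      exact this.clm_apply continuousOn_const
    -- max of |ψ| on [0,1]
    obtain ⟨t0, ht0, hmax⟩ := isCompact_Icc.exists_isMaxOn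
      (Set.nonempty_Icc.mpr zero_le_one) hψc.abs
    have hC : |ψ t0| < A := hbound t0 ht0
    have hmv : |g (p 1) - g (p 0)| ≤ |ψ t0| := by
      have := norm_image_sub_le_of_norm_deriv_le_segment_01'
        (f := fun s => g (p s)) (f' := ψ) (C := |ψ t0|)
        (fun t ht => (hder t ht).hasDerivWithinAt)
        (fun t ht => hmax (Set.Ico_subset_Icc_self ht))
      simpa using this
    have hp0 : p 0 = u := by simp [hp]
    have hp1 : p 1 = u + c := by simp [hp]
    have hfinal : g (u + c) < g u + A := by
      have h1 : g (p 1) - g (p 0) ≤ |g (p 1) - g (p 0)| := le_abs_self _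
      rw [hp0, hp1] at h1 hmv
      linarith
    constructor
    · linarith
    · intro _; linarith
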